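/- Let E be a real normed vector space, Θ ⊆ E a nonempty set with ‖θ‖ ≤ R_Θ for all θ ∈ Θ, and θ₁, …, θ_N ∈ Θ. Let ℓ₁, …, ℓ_N and ℓ̂₁, …, ℓ̂_N be functions E → ℝ, each CSN with smoothness β > 0. Let ε = (1/N) inf_{θ∈Θ} Σ_{n=1}^N ℓ_n(θ) and ε̂ = (1/N) inf_{θ∈Θ} Σ_{n=1}^N ℓ̂_n(θ). Then Σ_{n=1}^N ((ℓ_n′(θ_n) − ℓ̂_n′(θ_n))(θ_n))² ≤ 8β R_Θ² (Regret(ℓ_n) + Regret(ℓ̂_n) + Nε + Nε̂). -/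

import Mathlib

open Finset

/-- A differentiable function `f : E → ℝ` is CSN with smoothness `β` if it is convex,
non-negative, and its Fréchet derivative is `β`-Lipschitz in the operator (dual) norm. -/
def IsCSN {E : Type*} [NormedAddCommGroup E] [NormedSpace ℝ E]
    (f : E → ℝ) (β : ℝ) : Prop :=
  ConvexOn ℝ Set.univ f ∧ (∀ x, 0 ≤ f x) ∧ Differentiable ℝ f ∧
    ∀ x y, ‖fderiv ℝ f x - fderiv ℝ f y‖ ≤ β * ‖x - y‖

/-- `Regret(f_n) = Σ_{n=1}^N f_n(θ_n) − inf_{θ ∈ Θ} Σ_{n=1}^N f_n(θ)`. -/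
noncomputable def regret {E : Type*} (Θ : Set E) (N : ℕ)
    (f : ℕ → E → ℝ) (θ : ℕ → E) : ℝ :=
  (∑ n ∈ Finset.Icc 1 N, f n (θ n))
    - sInf ((fun x => ∑ n ∈ Finset.Icc 1 N, f n x) '' Θ)

/-- Descent-type lemma from a Lipschitz gradient (via MVT, with constant `β` instead of `β/2`). -/
lemma descent_aux {E : Type*} [NormedAddCommGroup E] [NormedSpace ℝ E]
    (f : E → ℝ) (β : ℝ) (hβ : 0 ≤ β)
    (hd : Differentiable ℝ f)
    (hL : ∀ x y, ‖fderiv ℝ f x - fderiv ℝ f y‖ ≤ β * ‖x - y‖)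
    (x y : E) : ‖f y - f x - (fderiv ℝ f x) (y - x)‖ ≤ (β * ‖y - x‖) * ‖y - x‖ := by
  apply Convex.norm_image_sub_le_of_norm_fderiv_le' (fun z _ => hd z)
    (fun z hz => ?_) (convex_closedBall x ‖y - x‖)
    (Metric.mem_closedBall_self (norm_nonneg _))
    (by simpa [Metric.mem_closedBall, dist_eq_norm] using le_refl ‖y - x‖)
  have hz' : ‖z - x‖ ≤ ‖y - x‖ := by simpa [Metric.mem_closedBall, dist_eq_norm] using hz
  exact (hL z x).trans (mul_le_mul_of_nonneg_left hz' hβ)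

/-- Self-bounding property of nonnegative functions with Lipschitz gradient. -/
lemma self_bounding {E : Type*} [NormedAddCommGroup E] [NormedSpace ℝ E]
    (f : E → ℝ) (β : ℝ) (hβ : 0 < β)
    (hd : Differentiable ℝ f) (hnn : ∀ x, 0 ≤ f x)
    (hL : ∀ x y, ‖fderiv ℝ f x - fderiv ℝ f y‖ ≤ β * ‖x - y‖)
    (x v : E) : ((fderiv ℝ f x) v) ^ 2 ≤ 4 * β * f x * ‖v‖ ^ 2 := by
  rcases eq_or_ne v 0 with rfl | hv
  · simp
  have hvn : (0:ℝ) < ‖v‖ := norm_pos_iff.mpr hv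
  set c : ℝ := (fderiv ℝ f x) v with hc
  set t : ℝ := c / (2 * β * ‖v‖ ^ 2) with ht
  set y : E := x - t • v with hy
  have hyx : y - x = (-t) • v := by rw [hy]; module
  have h1 := descent_aux f β hβ.le hd hL x y
  rw [hyx] at h1
  have h2 : (fderiv ℝ f x) ((-t) • v) = -t * c := by
    rw [map_smul]; simp [hc]
  have h3 : ‖(-t) • v‖ = |t| * ‖v‖ := by
    rw [norm_smul, Real.norm_eq_abs, abs_neg]
  rw [h2, h3] at h1
  have h4 : f y - f x - (-t * c) ≤ β * (|t| * ‖v‖) * (|t| * ‖v‖) :=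
    le_trans (le_abs_self _) h1
  have h5 : 0 ≤ f y := hnn y
  have h7 : |t| * |t| = t ^ 2 := by rw [← abs_mul, ← sq, abs_sq]
  have h8 : β * (|t| * ‖v‖) * (|t| * ‖v‖) = β * t ^ 2 * ‖v‖ ^ 2 := by
    have e : β * (|t| * ‖v‖) * (|t| * ‖v‖) = β * (|t| * |t|) * (‖v‖ * ‖v‖) := by ring
    rw [e, h7]; ring
  rw [h8] at h4
  have hb0 : β ≠ 0 := hβ.ne'
  have hv0 : ‖v‖ ≠ 0 := hvn.ne'
  have htD : t * (2 * β * ‖v‖ ^ 2) = c := by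
    rw [ht]; field_simp
  have htc : t * c = 2 * β * ‖v‖ ^ 2 * t ^ 2 := by rw [← htD]; ring
  have hfx : β * ‖v‖ ^ 2 * t ^ 2 ≤ f x := by nlinarith [h4, h5, htc]
  have hc2 : c ^ 2 = 4 * β ^ 2 * ‖v‖ ^ 4 * t ^ 2 := by rw [← htD]; ring
  have hmul := mul_le_mul_of_nonneg_left hfx (by positivity : (0:ℝ) ≤ 4 * β * ‖v‖ ^ 2)
  rw [show ((fderiv ℝ f x) v) ^ 2 = c ^ 2 from rfl, hc2]
  nlinarith [hmul]

/-- Bound (D.7) on the path-wise second-moment statistic `V` of the scalar martingale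
difference sequence `⟨∇ℓ_n(θ_n) − ∇ℓ̂_n(θ_n), θ_n⟩`. -/
theorem V_bound_scalar_mds
    {E : Type*} [NormedAddCommGroup E] [NormedSpace ℝ E]
    (Θ : Set E) (hne : Θ.Nonempty) (RΘ : ℝ) (hRΘ : ∀ x ∈ Θ, ‖x‖ ≤ RΘ)
    (N : ℕ) (θ : ℕ → E) (hθ : ∀ n ∈ Finset.Icc 1 N, θ n ∈ Θ)
    (l lhat : ℕ → E → ℝ) (β : ℝ) (hβ : 0 < β)
    (hlCSN : ∀ n ∈ Finset.Icc 1 N, IsCSN (l n) β)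
    (hlhatCSN : ∀ n ∈ Finset.Icc 1 N, IsCSN (lhat n) β)
    (ε εhat : ℝ)
    (hε : ε = (1 / (N : ℝ)) * sInf ((fun x => ∑ n ∈ Finset.Icc 1 N, l n x) '' Θ))
    (hεhat : εhat = (1 / (N : ℝ)) * sInf ((fun x => ∑ n ∈ Finset.Icc 1 N, lhat n x) '' Θ)) :
    ∑ n ∈ Finset.Icc 1 N,
        ((fderiv ℝ (l n) (θ n) - fderiv ℝ (lhat n) (θ n)) (θ n)) ^ 2
      ≤ 8 * β * RΘ ^ 2
          * (regret Θ N l θ + regret Θ N lhat θ + N * ε + N * εhat) := by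
  -- Step 1: the RHS factor equals the sum of the losses at the played points.
  have hfactor : regret Θ N l θ + regret Θ N lhat θ + N * ε + N * εhat
      = (∑ n ∈ Finset.Icc 1 N, l n (θ n)) + (∑ n ∈ Finset.Icc 1 N, lhat n (θ n)) := by
    rcases Nat.eq_zero_or_pos N with rfl | hN
    · have himg : ∀ g : ℕ → E → ℝ,
          ((fun x => ∑ n ∈ Finset.Icc 1 0, g n x) '' Θ) = {0} := by
        intro g
        rw [show Finset.Icc 1 0 = (∅ : Finset ℕ) from rfl]
        simpa using Set.Nonempty.image_const hne 0
      rw [hε, hεhat, regret, regret, himg l, himg lhat]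
      simp
    · have hN0 : (N : ℝ) ≠ 0 := Nat.cast_ne_zero.mpr hN.ne'
      rw [hε, hεhat, regret, regret]
      field_simp
      ring
  rw [hfactor]
  -- Step 2: termwise bound.
  have hstep : ∀ n ∈ Finset.Icc 1 N,
      ((fderiv ℝ (l n) (θ n) - fderiv ℝ (lhat n) (θ n)) (θ n)) ^ 2
        ≤ 8 * β * RΘ ^ 2 * (l n (θ n) + lhat n (θ n)) := by
    intro n hn
    obtain ⟨_, hl0, hld, hlL⟩ := hlCSN n hn
    obtain ⟨_, hh0, hhd, hhL⟩ := hlhatCSN n hn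
    have hθn := hθ n hn
    have hR : ‖θ n‖ ≤ RΘ := hRΘ _ hθn
    have hR0 : 0 ≤ RΘ := (norm_nonneg _).trans hR
    have ha := self_bounding (l n) β hβ hld hl0 hlL (θ n) (θ n)
    have hb := self_bounding (lhat n) β hβ hhd hh0 hhL (θ n) (θ n)
    have hnormsq : ‖θ n‖ ^ 2 ≤ RΘ ^ 2 := by nlinarith [norm_nonneg (θ n)]
    have ha' : ((fderiv ℝ (l n) (θ n)) (θ n)) ^ 2 ≤ 4 * β * l n (θ n) * RΘ ^ 2 :=
      ha.trans (mul_le_mul_of_nonneg_left hnormsq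
        (mul_nonneg (by positivity) (hl0 (θ n))))
    have hb' : ((fderiv ℝ (lhat n) (θ n)) (θ n)) ^ 2 ≤ 4 * β * lhat n (θ n) * RΘ ^ 2 :=
      hb.trans (mul_le_mul_of_nonneg_left hnormsq
        (mul_nonneg (by positivity) (hh0 (θ n))))
    have happ : (fderiv ℝ (l n) (θ n) - fderiv ℝ (lhat n) (θ n)) (θ n)
        = (fderiv ℝ (l n) (θ n)) (θ n) - (fderiv ℝ (lhat n) (θ n)) (θ n) := rfl
    rw [happ]
    nlinarith [sq_nonneg ((fderiv ℝ (l n) (θ n)) (θ n) + (fderiv ℝ (lhat n) (θ n)) (θ n))]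
  calc ∑ n ∈ Finset.Icc 1 N,
        ((fderiv ℝ (l n) (θ n) - fderiv ℝ (lhat n) (θ n)) (θ n)) ^ 2
      ≤ ∑ n ∈ Finset.Icc 1 N, 8 * β * RΘ ^ 2 * (l n (θ n) + lhat n (θ n)) :=
        Finset.sum_le_sum hstep
    _ = 8 * β * RΘ ^ 2
          * ((∑ n ∈ Finset.Icc 1 N, l n (θ n)) + (∑ n ∈ Finset.Icc 1 N, lhat n (θ n))) := by
        rw [← Finset.mul_sum, Finset.sum_add_distrib]
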